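/- For every QUBO H on variables x_1,…,x_n there exist a WCNF φ whose variable set contains {x_1,…,x_n} and an integer Δ such that for every x ∈ {0,1}^n the minimum of cost(β) over all finite-cost assignments β of φ extending x equals H(x) + Δ; in particular, the restrictions to {x_1,…,x_n} of the minimum-cost assignments of φ are exactly the ground states of H. Moreover tw(φ) ≤ max(tw(H), 2), tw(φ) ≤ tw(H) + 1, itw(φ) ≤ max(itw(H), 2), and itw(φ) ≤ itw(H) + 1. -/

import Mathlib

open scoped Classical

/-- A literal: a propositional variable (indexed by a natural number) or its negation. -/
structure Lit where
  var : ℕ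
  pos : Bool
deriving DecidableEq

/-- A clause is a finite set of literals. -/
abbrev Clause := Finset Lit

/-- The variables occurring in a clause. -/
def Clause.varsOf (c : Clause) : Finset ℕ := c.image Lit.var

/-- A weighted CNF: a finite set of clauses with weights in `ℕ ∪ {∞}`. -/
structure WCNF where
  clauses : Finset Clause
  weight : Clause → ℕ∞

/-- An assignment satisfies a literal. -/
def satLit (β : ℕ → Bool) (l : Lit) : Prop := β l.var = l.pos

/-- An assignment satisfies a clause if it makes some literal true. -/
def satClause (β : ℕ → Bool) (c : Clause) : Prop := ∃ l ∈ c, satLit β l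

/-- The cost of an assignment: sum of the weights of the falsified clauses. -/
noncomputable def WCNF.costA (φ : WCNF) (β : ℕ → Bool) : ℕ∞ :=
  ∑ c ∈ φ.clauses.filter (fun c => ¬ satClause β c), φ.weight c

/-- The cost of a WCNF: the minimum cost over all assignments. -/
noncomputable def WCNF.cost (φ : WCNF) : ℕ∞ := ⨅ β : ℕ → Bool, φ.costA β

/-- The variables of a set of clauses. -/
def cnfVars (C : Finset Clause) : Finset ℕ := C.biUnion Clause.varsOf

/-- The variables of a WCNF. -/
def WCNF.vars (φ : WCNF) : Finset ℕ := cnfVars φ.clauses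

/-- The primal graph of a set of clauses: vertices are the variables (all of `ℕ`),
with an edge between distinct variables occurring together in a clause. -/
def primalOf (C : Finset Clause) : SimpleGraph ℕ :=
  SimpleGraph.fromRel (fun u v => ∃ c ∈ C, u ∈ c.varsOf ∧ v ∈ c.varsOf)

/-- The incidence graph of a set of clauses: the bipartite graph on variables and
clauses joining each clause to the variables it contains. -/
def incOf (C : Finset Clause) : SimpleGraph (ℕ ⊕ Clause) :=
  SimpleGraph.fromRel (fun a b =>
    ∃ x c, a = Sum.inl x ∧ b = Sum.inr c ∧ c ∈ C ∧ x ∈ c.varsOf)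

/-- A tree decomposition of a graph `G`: a tree `TG` together with finite bags such that
every vertex occurs in some bag, every edge is covered by a bag, and for each vertex the
nodes whose bags contain it induce a nonempty connected subgraph (hence a subtree). -/
structure TreeDecomp {V T : Type} (G : SimpleGraph V) (TG : SimpleGraph T) where
  isTree : TG.IsTree
  bag : T → Finset V
  covers_vertex : ∀ v : V, ∃ t, v ∈ bag t
  covers_edge : ∀ u v : V, G.Adj u v → ∃ t, u ∈ bag t ∧ v ∈ bag t
  connected : ∀ v : V, (TG.induce {t | v ∈ bag t}).Connected

/-- `G` has a tree decomposition of width at most `k`. -/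
def HasTD {V : Type} (G : SimpleGraph V) (k : ℕ) : Prop :=
  ∃ (T : Type) (TG : SimpleGraph T) (D : TreeDecomp G TG), ∀ t, (D.bag t).card ≤ k + 1

/-- The treewidth of a graph: the minimum width of a tree decomposition (`⊤` if none). -/
noncomputable def tw {V : Type} (G : SimpleGraph V) : ℕ∞ :=
  sInf {x : ℕ∞ | ∃ k : ℕ, x = k ∧ HasTD G k}

/-- The primal treewidth of a WCNF. -/
noncomputable def WCNF.tw (φ : WCNF) : ℕ∞ := _root_.tw (primalOf φ.clauses)

/-- The incidence treewidth of a WCNF. -/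
noncomputable def WCNF.itw (φ : WCNF) : ℕ∞ := _root_.tw (incOf φ.clauses)

/-- A (monotone) weighted CNF with integer weights. -/
structure ZWCNF where
  clauses : Finset Clause
  weight : Clause → ℤ

/-- Cost of an assignment for an integer-weighted CNF. -/
noncomputable def ZWCNF.costA (φ : ZWCNF) (β : ℕ → Bool) : ℤ :=
  ∑ c ∈ φ.clauses.filter (fun c => ¬ satClause β c), φ.weight c

/-- `v` is the minimum cost of `φ`. -/
def ZWCNF.IsMinCost (φ : ZWCNF) (v : ℤ) : Prop :=
  (∃ β, φ.costA β = v) ∧ ∀ β, v ≤ φ.costA β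

/-- A formula is monotone if every literal occurring in it is negative. -/
def ZWCNF.Mono (φ : ZWCNF) : Prop := ∀ c ∈ φ.clauses, ∀ l ∈ c, l.pos = false

noncomputable def ZWCNF.tw (φ : ZWCNF) : ℕ∞ := _root_.tw (primalOf φ.clauses)

noncomputable def ZWCNF.itw (φ : ZWCNF) : ℕ∞ := _root_.tw (incOf φ.clauses)

/-- A QUBO instance: `H(x) = Σ_i lin i * x_i + Σ_{i<j} quad i j * x_i x_j`
with integer weights supported on a finite set of variables. -/
structure QUBO where
  vars : Finset ℕ
  lin : ℕ → ℤ
  quad : ℕ → ℕ → ℤ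
  lin_supp : ∀ i, lin i ≠ 0 → i ∈ vars
  quad_supp : ∀ i j, quad i j ≠ 0 → i ∈ vars ∧ j ∈ vars
  quad_lt : ∀ i j, quad i j ≠ 0 → i < j

/-- Value of a Boolean, identifying `true` with `1` and `false` with `0`. -/
def bval (b : Bool) : ℤ := if b then 1 else 0

/-- Evaluation of a QUBO Hamiltonian on a `{0,1}`-assignment. -/
def QUBO.eval (H : QUBO) (x : ℕ → Bool) : ℤ :=
  (∑ i ∈ H.vars, H.lin i * bval (x i)) +
    ∑ i ∈ H.vars, ∑ j ∈ H.vars, H.quad i j * bval (x i) * bval (x j)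

/-- A ground state: an assignment minimizing `H`. -/
def QUBO.IsGround (H : QUBO) (x : ℕ → Bool) : Prop := ∀ y, H.eval x ≤ H.eval y

/-- `μ` is the minimum value of `H`. -/
def QUBO.IsMinVal (H : QUBO) (μ : ℤ) : Prop :=
  (∃ x, H.eval x = μ) ∧ ∀ x, μ ≤ H.eval x

/-- The primal graph of a QUBO: an edge `{i,j}` whenever the quadratic weight is nonzero. -/
def QUBO.primal (H : QUBO) : SimpleGraph ℕ :=
  SimpleGraph.fromRel (fun i j => H.quad i j ≠ 0)

/-- The incidence graph of a QUBO: bipartite graph on variables and nonzero terms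
(linear terms indexed by a variable, quadratic terms by a pair of variables). -/
def QUBO.inc (H : QUBO) : SimpleGraph (ℕ ⊕ (ℕ ⊕ ℕ × ℕ)) :=
  SimpleGraph.fromRel (fun a b =>
    (∃ i, a = Sum.inl i ∧ b = Sum.inr (Sum.inl i) ∧ H.lin i ≠ 0) ∨
    (∃ x i j, a = Sum.inl x ∧ b = Sum.inr (Sum.inr (i, j)) ∧ H.quad i j ≠ 0 ∧ (x = i ∨ x = j)))

noncomputable def QUBO.tw (H : QUBO) : ℕ∞ := _root_.tw H.primal

noncomputable def QUBO.itw (H : QUBO) : ℕ∞ := _root_.tw H.inc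

/-- An assignment satisfies an (unweighted) CNF if it satisfies every clause. -/
def satCNF (β : ℕ → Bool) (φ : Finset Clause) : Prop := ∀ c ∈ φ, satClause β c

/-- The weight of an assignment: the sum of weights of the variables set to true. -/
noncomputable def wOf (φ : Finset Clause) (w : ℕ → ℕ) (β : ℕ → Bool) : ℕ :=
  ∑ x ∈ (cnfVars φ).filter (fun x => β x = true), w x

/-- The satisfying assignments of a CNF, represented as the subsets of its variable set
consisting of the variables set to true. -/
noncomputable def satSets (φ : Finset Clause) : Finset (Finset ℕ) :=
  (cnfVars φ).powerset.filter (fun S => ∀ c ∈ φ, ∃ l ∈ c, ((l.var ∈ S) ↔ l.pos = true))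


/-! ### Auxiliary construction for stmt9 -/

namespace Stmt9

/-- Effective linear coefficient after gadget decomposition. -/
def LL (H : QUBO) (i : ℕ) : ℤ := H.lin i + ∑ j ∈ H.vars, min (H.quad i j) 0

/-- Unit clause at variable `i`. -/
def ucl (H : QUBO) (i : ℕ) : Clause := {⟨i, decide (LL H i < 0)⟩}

/-- Binary clause for a quadratic term. -/
def bcl (H : QUBO) (p : ℕ × ℕ) : Clause :=
  {⟨p.1, false⟩, ⟨p.2, decide (H.quad p.1 p.2 < 0)⟩}

/-- The pairs carrying a nonzero quadratic term. -/
def PP (H : QUBO) : Finset (ℕ × ℕ) :=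
  (H.vars ×ˢ H.vars).filter fun p => H.quad p.1 p.2 ≠ 0

/-- Clauses of the constructed WCNF. -/
def cls (H : QUBO) : Finset Clause := H.vars.image (ucl H) ∪ (PP H).image (bcl H)

/-- Natural-number weight of a clause. -/
def nw (H : QUBO) (c : Clause) : ℕ :=
  (∑ i ∈ H.vars.filter (fun i => ucl H i = c), (LL H i).natAbs) +
    ∑ p ∈ (PP H).filter (fun p => bcl H p = c), (H.quad p.1 p.2).natAbs

/-- The constructed WCNF. -/
noncomputable def Phi (H : QUBO) : WCNF := ⟨cls H, fun c => (nw H c : ℕ∞)⟩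

/-- Cost of an assignment, as a natural number. -/
noncomputable def Ncost (H : QUBO) (β : ℕ → Bool) : ℕ :=
  ∑ c ∈ (cls H).filter (fun c => ¬ satClause β c), nw H c

/-- The offset. -/
def Dlt (H : QUBO) : ℤ := ∑ i ∈ H.vars, max (-(LL H i)) 0

lemma sat_ucl (H : QUBO) (β : ℕ → Bool) (i : ℕ) :
    satClause β (ucl H i) ↔ β i = decide (LL H i < 0) := by
  simp [ucl, satClause, satLit]

lemma sat_bcl (H : QUBO) (β : ℕ → Bool) (p : ℕ × ℕ) :
    satClause β (bcl H p) ↔ (β p.1 = false ∨ β p.2 = decide (H.quad p.1 p.2 < 0)) := by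
  simp [bcl, satClause, satLit]

lemma costA_eq (H : QUBO) (β : ℕ → Bool) : (Phi H).costA β = (Ncost H β : ℕ∞) := by
  simp [Phi, WCNF.costA, Ncost, Nat.cast_sum]

lemma ncost_eq (H : QUBO) (β : ℕ → Bool) : (Ncost H β : ℤ) = H.eval β + Dlt H := by
  classical
  have hsplit : (Ncost H β : ℤ) =
      (∑ c ∈ (cls H).filter (fun c => ¬ satClause β c),
        ∑ i ∈ H.vars.filter (fun i => ucl H i = c), ((LL H i).natAbs : ℤ)) +
      ∑ c ∈ (cls H).filter (fun c => ¬ satClause β c),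
        ∑ p ∈ (PP H).filter (fun p => bcl H p = c), ((H.quad p.1 p.2).natAbs : ℤ) := by
    rw [Ncost, Nat.cast_sum, ← Finset.sum_add_distrib]
    refine Finset.sum_congr rfl fun c _ => ?_
    rw [nw]
    push_cast
    ring
  have hA : (∑ c ∈ (cls H).filter (fun c => ¬ satClause β c),
        ∑ i ∈ H.vars.filter (fun i => ucl H i = c), ((LL H i).natAbs : ℤ)) =
      ∑ i ∈ H.vars.filter (fun i => ¬ satClause β (ucl H i)), ((LL H i).natAbs : ℤ) := by
    rw [← Finset.sum_fiberwise_of_maps_to (g := ucl H)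
      (t := (cls H).filter (fun c => ¬ satClause β c))]
    · apply Finset.sum_congr rfl
      intro c hc
      apply Finset.sum_congr _ (fun _ _ => rfl)
      rw [Finset.mem_filter] at hc
      ext i
      simp only [Finset.mem_filter]
      constructor
      · rintro ⟨hi, he⟩; exact ⟨⟨hi, he ▸ hc.2⟩, he⟩
      · rintro ⟨⟨hi, _⟩, he⟩; exact ⟨hi, he⟩
    · intro i hi
      rw [Finset.mem_filter] at hi ⊢
      exact ⟨Finset.mem_union_left _ (Finset.mem_image_of_mem _ hi.1), hi.2⟩
  have hB : (∑ c ∈ (cls H).filter (fun c => ¬ satClause β c),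
        ∑ p ∈ (PP H).filter (fun p => bcl H p = c), ((H.quad p.1 p.2).natAbs : ℤ)) =
      ∑ p ∈ (PP H).filter (fun p => ¬ satClause β (bcl H p)), ((H.quad p.1 p.2).natAbs : ℤ) := by
    rw [← Finset.sum_fiberwise_of_maps_to (g := bcl H)
      (t := (cls H).filter (fun c => ¬ satClause β c))]
    · apply Finset.sum_congr rfl
      intro c hc
      apply Finset.sum_congr _ (fun _ _ => rfl)
      rw [Finset.mem_filter] at hc
      ext p
      simp only [Finset.mem_filter]
      constructor
      · rintro ⟨hp, he⟩; exact ⟨⟨hp, he ▸ hc.2⟩, he⟩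
      · rintro ⟨⟨hp, _⟩, he⟩; exact ⟨hp, he⟩
    · intro p hp
      rw [Finset.mem_filter] at hp ⊢
      exact ⟨Finset.mem_union_right _ (Finset.mem_image_of_mem _ hp.1), hp.2⟩
  have hA2 : (∑ i ∈ H.vars.filter (fun i => ¬ satClause β (ucl H i)), ((LL H i).natAbs : ℤ)) =
      ∑ i ∈ H.vars, (LL H i * bval (β i) + max (-(LL H i)) 0) := by
    rw [Finset.sum_filter]
    apply Finset.sum_congr rfl
    intro i _
    rw [sat_ucl]
    by_cases hL : LL H i < 0 <;> cases hb : β i <;>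
      simp [hL, hb, bval] <;>
      rcases abs_cases (LL H i) with ⟨h1, h2⟩ | ⟨h1, h2⟩ <;> omega
  have hB2 : (∑ p ∈ (PP H).filter (fun p => ¬ satClause β (bcl H p)), ((H.quad p.1 p.2).natAbs : ℤ)) =
      ∑ p ∈ PP H, (H.quad p.1 p.2 * bval (β p.1) * bval (β p.2)
        - min (H.quad p.1 p.2) 0 * bval (β p.1)) := by
    rw [Finset.sum_filter]
    apply Finset.sum_congr rfl
    intro p _
    rw [sat_bcl]
    by_cases hL : H.quad p.1 p.2 < 0 <;> cases hb1 : β p.1 <;> cases hb2 : β p.2 <;>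
      simp [hL, hb1, hb2, bval] <;>
      rcases abs_cases (H.quad p.1 p.2) with ⟨h1, h2⟩ | ⟨h1, h2⟩ <;> omega
  have e1 : (∑ p ∈ PP H, H.quad p.1 p.2 * bval (β p.1) * bval (β p.2)) =
      ∑ i ∈ H.vars, ∑ j ∈ H.vars, H.quad i j * bval (β i) * bval (β j) := by
    rw [PP, Finset.sum_filter_of_ne, Finset.sum_product]
    intro p _ hne h0
    simp [h0] at hne
  have e2 : (∑ p ∈ PP H, min (H.quad p.1 p.2) 0 * bval (β p.1)) =
      ∑ i ∈ H.vars, (∑ j ∈ H.vars, min (H.quad i j) 0) * bval (β i) := by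
    rw [PP, Finset.sum_filter_of_ne, Finset.sum_product]
    · apply Finset.sum_congr rfl
      intro i _
      rw [Finset.sum_mul]
    · intro p _ hne h0
      simp [h0] at hne
  have e3 : (∑ i ∈ H.vars, LL H i * bval (β i)) =
      (∑ i ∈ H.vars, H.lin i * bval (β i)) +
        ∑ i ∈ H.vars, (∑ j ∈ H.vars, min (H.quad i j) 0) * bval (β i) := by
    rw [← Finset.sum_add_distrib]
    apply Finset.sum_congr rfl
    intro i _
    rw [LL]; ring
  rw [hsplit, hA, hB, hA2, hB2, QUBO.eval, Dlt]
  rw [Finset.sum_add_distrib, Finset.sum_sub_distrib, e1, e2, e3]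
  ring

lemma eval_congr (H : QUBO) {β x : ℕ → Bool} (hb : ∀ i ∈ H.vars, β i = x i) :
    H.eval β = H.eval x := by
  rw [QUBO.eval, QUBO.eval]
  congr 1
  · exact Finset.sum_congr rfl fun i hi => by rw [hb i hi]
  · exact Finset.sum_congr rfl fun i hi =>
      Finset.sum_congr rfl fun j hj => by rw [hb i hi, hb j hj]


lemma varsOf_ucl (H : QUBO) (i : ℕ) : (ucl H i).varsOf = {i} := by
  simp [ucl, Clause.varsOf]

lemma varsOf_bcl (H : QUBO) (p : ℕ × ℕ) : (bcl H p).varsOf = {p.1, p.2} := by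
  simp [bcl, Clause.varsOf, Finset.image_insert]

lemma card_ucl (H : QUBO) (i : ℕ) : (ucl H i).card = 1 := by simp [ucl]

lemma card_bcl (H : QUBO) {p : ℕ × ℕ} (hp : p.1 ≠ p.2) : (bcl H p).card = 2 := by
  rw [bcl, Finset.card_insert_of_notMem, Finset.card_singleton]
  simp [hp]

/-- Dummy clauses (of cardinality 3), used as injective placeholders. -/
def dd (k : ℕ) : Clause := {⟨k, true⟩, ⟨k, false⟩, ⟨k + 1, true⟩}

lemma card_dd (k : ℕ) : (dd k).card = 3 := by
  rw [dd, Finset.card_insert_of_notMem, Finset.card_insert_of_notMem,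
    Finset.card_singleton]
  · simp
  · simp

lemma dd_inj : Function.Injective dd := by
  intro k k' h
  have : (⟨k, false⟩ : Lit) ∈ dd k' := by rw [← h]; simp [dd]
  simp [dd] at this
  omega

lemma mem_PP (H : QUBO) {p : ℕ × ℕ} : p ∈ PP H ↔ H.quad p.1 p.2 ≠ 0 := by
  constructor
  · intro h; exact (Finset.mem_filter.mp h).2
  · intro h
    exact Finset.mem_filter.mpr ⟨Finset.mem_product.mpr
      ⟨(H.quad_supp _ _ h).1, (H.quad_supp _ _ h).2⟩, h⟩

lemma bcl_inj (H : QUBO) {p p' : ℕ × ℕ} (hp : H.quad p.1 p.2 ≠ 0)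
    (hp' : H.quad p'.1 p'.2 ≠ 0) (h : bcl H p = bcl H p') : p = p' := by
  have hlt := H.quad_lt _ _ hp
  have hlt' := H.quad_lt _ _ hp'
  have hv : ({p.1, p.2} : Finset ℕ) = {p'.1, p'.2} := by
    rw [← varsOf_bcl, ← varsOf_bcl, h]
  have h1 : p.1 = p'.1 ∨ p.1 = p'.2 := by
    have : p.1 ∈ ({p'.1, p'.2} : Finset ℕ) := hv ▸ (by simp)
    simpa using this
  have h2 : p.2 = p'.1 ∨ p.2 = p'.2 := by
    have : p.2 ∈ ({p'.1, p'.2} : Finset ℕ) := hv ▸ (by simp)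
    simpa using this
  have h1' : p'.1 = p.1 ∨ p'.1 = p.2 := by
    have : p'.1 ∈ ({p.1, p.2} : Finset ℕ) := hv ▸ (by simp)
    simpa using this
  have : p.1 = p'.1 ∧ p.2 = p'.2 := by omega
  exact Prod.ext this.1 this.2

lemma primal_eq (H : QUBO) : primalOf (cls H) = H.primal := by
  ext u v
  simp only [primalOf, QUBO.primal, SimpleGraph.fromRel_adj]
  constructor
  · rintro ⟨hne, hc⟩
    refine ⟨hne, ?_⟩
    have key : ∀ c ∈ cls H, u ∈ c.varsOf → v ∈ c.varsOf →
        (H.quad u v ≠ 0 ∨ H.quad v u ≠ 0) := by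
      intro c hc hu hv
      rw [cls, Finset.mem_union] at hc
      rcases hc with hc | hc
      · obtain ⟨i, _, rfl⟩ := Finset.mem_image.mp hc
        rw [varsOf_ucl, Finset.mem_singleton] at hu hv
        exact absurd (hu.trans hv.symm) hne
      · obtain ⟨p, hp, rfl⟩ := Finset.mem_image.mp hc
        have hq := (mem_PP H).mp hp
        rw [varsOf_bcl, Finset.mem_insert, Finset.mem_singleton] at hu hv
        rcases hu with rfl | rfl <;> rcases hv with h | h
        · exact absurd h.symm hne
        · subst h; exact Or.inl hq
        · subst h; exact Or.inr hq
        · exact absurd h.symm hne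
    rcases hc with ⟨c, hc, hu, hv⟩ | ⟨c, hc, hv, hu⟩
    · exact key c hc hu hv
    · exact key c hc hu hv
  · rintro ⟨hne, hq⟩
    refine ⟨hne, ?_⟩
    rcases hq with hq | hq
    · exact Or.inl ⟨bcl H (u, v), Finset.mem_union_right _
        (Finset.mem_image_of_mem _ ((mem_PP H).mpr hq)), by simp [varsOf_bcl]⟩
    · exact Or.inr ⟨bcl H (v, u), Finset.mem_union_right _
        (Finset.mem_image_of_mem _ ((mem_PP H).mpr hq)), by simp [varsOf_bcl]⟩

lemma vars_sub (H : QUBO) : H.vars ⊆ (Phi H).vars := by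
  intro i hi
  rw [Phi, WCNF.vars, cnfVars]
  apply Finset.mem_biUnion.mpr
  exact ⟨ucl H i, Finset.mem_union_left _ (Finset.mem_image_of_mem _ hi),
    by rw [varsOf_ucl]; simp⟩


section Helpers

variable {X : Type} {G : SimpleGraph X}

lemma last_edge : ∀ {a b : X} (p : G.Walk a b), 0 < p.length →
    ∃ u, G.Adj u b ∧ s(u, b) ∈ p.edges := by
  intro a b p
  induction p with
  | nil => simp
  | @cons x y z h q ih =>
    intro _
    rcases Nat.eq_zero_or_pos q.length with h0 | hpos
    · have hyz : y = z := SimpleGraph.Walk.eq_of_length_eq_zero h0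
      subst hyz
      exact ⟨x, h, by simp⟩
    · obtain ⟨u, hu, hm⟩ := ih hpos
      exact ⟨u, hu, by simp [hm]⟩

lemma cycle_not_pendant {v : X} (hdeg : ∀ a b, G.Adj a v → G.Adj b v → a = b)
    {u : X} {c : G.Walk u u} (hc : c.IsCycle) : v ∉ c.support := by
  intro hv
  have hc' := hc.rotate hv
  set c' := c.rotate v hv with hc'def
  have hlen : 3 ≤ c'.length := hc'.three_le_length
  cases hcc : c' with
  | nil => rw [hcc] at hlen; simp at hlen
  | @cons _ w _ hadj p =>
    rw [hcc] at hc' hlen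
    have hplen : 0 < p.length := by
      simp [SimpleGraph.Walk.length_cons] at hlen; omega
    obtain ⟨u', hu', hm⟩ := last_edge p hplen
    have huw : u' = w := hdeg u' w hu' hadj.symm
    subst huw
    have hnodup := hc'.edges_nodup
    rw [SimpleGraph.Walk.edges_cons] at hnodup
    rw [Sym2.eq_swap] at hm
    exact (List.nodup_cons.mp hnodup).1 hm

lemma conn_induce_singleton (G : SimpleGraph X) (v : X) :
    (G.induce {v}).Connected := by
  rw [SimpleGraph.connected_iff]
  refine ⟨?_, ⟨⟨v, rfl⟩⟩⟩
  rintro ⟨a, ha⟩ ⟨b, hb⟩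
  have : a = b := by
    simp only [Set.mem_singleton_iff] at ha hb; rw [ha, hb]
  subst this
  rfl

lemma conn_extend {S0 S : Set X} (hS0 : (G.induce S0).Connected) (hsub : S0 ⊆ S)
    (hS : ∀ x ∈ S, x ∉ S0 → ∃ y ∈ S0, G.Adj y x) : (G.induce S).Connected := by
  have hne : S0.Nonempty := by
    obtain ⟨⟨x, hx⟩⟩ := hS0.nonempty
    exact ⟨x, hx⟩
  let ι : G.induce S0 →g G.induce S :=
    ⟨fun a => ⟨a.1, hsub a.2⟩, fun hadj => hadj⟩
  have key : ∀ a : {x // x ∈ S}, ∃ a' : {x // x ∈ S0},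
      (G.induce S).Reachable a ⟨a'.1, hsub a'.2⟩ := by
    rintro ⟨a, ha⟩
    by_cases h0 : a ∈ S0
    · exact ⟨⟨a, h0⟩, SimpleGraph.Reachable.refl _⟩
    · obtain ⟨y, hy, hadj⟩ := hS a ha h0
      refine ⟨⟨y, hy⟩, ?_⟩
      have : (G.induce S).Adj ⟨a, ha⟩ ⟨y, hsub hy⟩ := hadj.symm
      exact this.reachable
  rw [SimpleGraph.connected_iff]
  constructor
  · rintro a b
    obtain ⟨a', hra⟩ := key a
    obtain ⟨b', hrb⟩ := key b
    have hmid : (G.induce S).Reachable ⟨a'.1, hsub a'.2⟩ ⟨b'.1, hsub b'.2⟩ :=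
      SimpleGraph.Reachable.map ι (hS0.preconnected a' b')
    exact (hra.trans hmid).trans hrb.symm
  · obtain ⟨x, hx⟩ := hne
    exact ⟨⟨x, hsub hx⟩⟩

end Helpers


/-- Transfer a tree decomposition along an injective map with pendant vertices. -/
lemma transfer {V V' : Type} {G : SimpleGraph V} {G' : SimpleGraph V'}
    (h : V → V') (hinj : Function.Injective h) (base : V' → V)
    (hcov : ∀ a b, G'.Adj a b →
      (∃ u v, G.Adj u v ∧ a = h u ∧ b = h v) ∨
      (∃ v', v' ∉ Set.range h ∧
        ((a = h (base v') ∧ b = v') ∨ (b = h (base v') ∧ a = v'))))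
    {k : ℕ} (hk : HasTD G k) : HasTD G' (max k 1) := by
  classical
  obtain ⟨T, TG, D, hw⟩ := hk
  haveI : Nonempty T := D.isTree.isConnected.nonempty
  set τ : V → T := fun u => (D.covers_vertex u).choose with hτdef
  have hτ : ∀ u, u ∈ D.bag (τ u) := fun u => (D.covers_vertex u).choose_spec
  set att : V' → T := fun v' => τ (base v') with hattdef
  set TG' : SimpleGraph (T ⊕ V') := SimpleGraph.fromRel (fun a b =>
    (∃ t t', a = Sum.inl t ∧ b = Sum.inl t' ∧ TG.Adj t t') ∨
    (∃ v', a = Sum.inl (att v') ∧ b = Sum.inr v')) with hTG'def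
  have adj_ll : ∀ t t', TG'.Adj (Sum.inl t) (Sum.inl t') ↔ TG.Adj t t' := by
    intro t t'
    rw [hTG'def, SimpleGraph.fromRel_adj]
    constructor
    · rintro ⟨hne, (⟨a, b, ha, hb, hab⟩ | ⟨w, _, hw2⟩) | (⟨a, b, ha, hb, hab⟩ | ⟨w, _, hw2⟩)⟩
      · cases ha; cases hb; exact hab
      · cases hw2
      · cases ha; cases hb; exact hab.symm
      · cases hw2
    · intro hadj
      exact ⟨by simpa using hadj.ne, Or.inl (Or.inl ⟨t, t', rfl, rfl, hadj⟩)⟩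
  have adj_lr : ∀ t (v' : V'), TG'.Adj (Sum.inl t) (Sum.inr v') ↔ t = att v' := by
    intro t v'
    rw [hTG'def, SimpleGraph.fromRel_adj]
    constructor
    · rintro ⟨hne, (⟨a, b, ha, hb, hab⟩ | ⟨w, hw1, hw2⟩) | (⟨a, b, ha, hb, hab⟩ | ⟨w, hw1, hw2⟩)⟩
      · cases hb
      · cases hw1; cases hw2; rfl
      · cases ha
      · cases hw1
    · rintro rfl
      exact ⟨by simp, Or.inl (Or.inr ⟨v', rfl, rfl⟩)⟩
  have adj_rr : ∀ (w w' : V'), ¬ TG'.Adj (Sum.inr w) (Sum.inr w') := by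
    intro w w'
    rw [hTG'def, SimpleGraph.fromRel_adj]
    rintro ⟨hne, (⟨a, b, ha, hb, hab⟩ | ⟨x, hx1, hx2⟩) | (⟨a, b, ha, hb, hab⟩ | ⟨x, hx1, hx2⟩)⟩
    · cases ha
    · cases hx1
    · cases ha
    · cases hx1
  -- TG' is a tree
  have htree : TG'.IsTree := by
    constructor
    · -- connected
      rw [SimpleGraph.connected_iff]
      refine ⟨?_, ⟨Sum.inl Classical.ofNonempty⟩⟩
      have reach_l : ∀ t t', TG'.Reachable (Sum.inl t) (Sum.inl t') := fun t t' =>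
        SimpleGraph.Reachable.map
          (⟨Sum.inl, fun hadj => (adj_ll _ _).mpr hadj⟩ : TG →g TG')
          (D.isTree.isConnected.preconnected t t')
      have reach_r : ∀ (v' : V'), TG'.Reachable (Sum.inl (att v')) (Sum.inr v') :=
        fun v' => ((adj_lr _ _).mpr rfl).reachable
      rintro (t | w) (t' | w')
      · exact reach_l t t'
      · exact (reach_l t (att w')).trans (reach_r w')
      · exact ((reach_l (att w) t').symm.trans (reach_r w)).symm
      · exact ((reach_r w).symm.trans (reach_l (att w) (att w'))).trans (reach_r w')
    · -- acyclic
      intro v c hc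
      have hno_inr : ∀ x ∈ c.support, ∃ t, x = Sum.inl t := by
        rintro (t | w) hx
        · exact ⟨t, rfl⟩
        · exfalso
          refine cycle_not_pendant (v := Sum.inr w) ?_ hc hx
          rintro (a | a) (b | b) ha hb
          · rw [adj_lr] at ha hb; rw [ha, hb]
          · exact absurd hb (adj_rr _ _)
          · exact absurd ha (adj_rr _ _)
          · exact absurd ha (adj_rr _ _)
      have lift : ∀ (x y : T ⊕ V') (p : TG'.Walk x y) (a b : T),
          x = Sum.inl a → y = Sum.inl b → (∀ z ∈ p.support, ∃ t, z = Sum.inl t) →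
          ∃ q : TG.Walk a b, p.edges = q.edges.map (Sym2.map Sum.inl) ∧
            p.support = q.support.map Sum.inl := by
        intro x y p
        induction p with
        | nil =>
          intro a b hxa hxb _
          subst hxa
          cases hxb
          exact ⟨SimpleGraph.Walk.nil, by simp, by simp⟩
        | @cons x z y hadj p ih =>
          intro a b hxa hxb hsup
          subst hxa
          subst hxb
          obtain ⟨t, rfl⟩ := hsup z (by simp)
          have hadj' : TG.Adj a t := (adj_ll _ _).mp hadj
          obtain ⟨q, he, hs⟩ := ih t b rfl rfl
            (fun z hz => hsup z (by simp [hz]))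
          refine ⟨SimpleGraph.Walk.cons hadj' q, ?_, ?_⟩
          · rw [SimpleGraph.Walk.edges_cons, SimpleGraph.Walk.edges_cons, he]
            simp
          · rw [SimpleGraph.Walk.support_cons, SimpleGraph.Walk.support_cons, hs]
            simp
      obtain ⟨a, rfl⟩ := hno_inr v c.start_mem_support
      obtain ⟨q, he, hs⟩ := lift _ _ c a a rfl rfl hno_inr
      have hq : q.IsCycle := by
        have hlen : c.length = q.length := by
          rw [← SimpleGraph.Walk.length_edges, ← SimpleGraph.Walk.length_edges, he,
            List.length_map]
        refine ⟨⟨⟨?_⟩, ?_⟩, ?_⟩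
        · have := hc.edges_nodup
          rw [he] at this
          exact this.of_map _
        · intro hq0
          have := hc.three_le_length
          rw [hlen, hq0] at this
          simp at this
        · have h2 := hc.support_nodup
          rw [hs, ← List.map_tail] at h2
          exact h2.of_map _
      exact D.isTree.IsAcyclic q hq
  -- the decomposition
  set bag' : T ⊕ V' → Finset V' := fun n =>
    match n with
    | Sum.inl t => (D.bag t).image h
    | Sum.inr v' => if v' ∈ Set.range h then ∅ else {h (base v'), v'}
    with hbagdef
  have mem_bag_inl : ∀ (x : V') t, x ∈ bag' (Sum.inl t) ↔ ∃ w ∈ D.bag t, h w = x := by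
    intro x t; simp [hbagdef]
  have mem_bag_inr : ∀ (x w : V'), x ∈ bag' (Sum.inr w) ↔
      (w ∉ Set.range h ∧ (x = h (base w) ∨ x = w)) := by
    intro x w
    show x ∈ (if w ∈ Set.range h then (∅ : Finset V') else {h (base w), w}) ↔ _
    by_cases hrw : w ∈ Set.range h
    · simp [hrw]
    · simp [hrw, Finset.mem_insert]
  have mem_bag_h : ∀ (u : V) t, h u ∈ bag' (Sum.inl t) ↔ u ∈ D.bag t := by
    intro u t
    rw [mem_bag_inl]
    constructor
    · rintro ⟨w, hw, hwe⟩; rwa [← hinj hwe]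
    · intro hu; exact ⟨u, hu, rfl⟩
  refine ⟨T ⊕ V', TG', ⟨htree, bag', ?_, ?_, ?_⟩, ?_⟩
  · -- covers_vertex
    intro v'
    by_cases hr : v' ∈ Set.range h
    · obtain ⟨u, rfl⟩ := hr
      exact ⟨Sum.inl (τ u), (mem_bag_h u _).mpr (hτ u)⟩
    · exact ⟨Sum.inr v', (mem_bag_inr _ _).mpr ⟨hr, Or.inr rfl⟩⟩
  · -- covers_edge
    intro a b hadj
    rcases hcov a b hadj with ⟨u, v, huv, rfl, rfl⟩ | ⟨v', hr, hab⟩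
    · obtain ⟨t, ht1, ht2⟩ := D.covers_edge u v huv
      exact ⟨Sum.inl t, (mem_bag_h u t).mpr ht1, (mem_bag_h v t).mpr ht2⟩
    · have hm1 : h (base v') ∈ bag' (Sum.inr v') := (mem_bag_inr _ _).mpr ⟨hr, Or.inl rfl⟩
      have hm2 : v' ∈ bag' (Sum.inr v') := (mem_bag_inr _ _).mpr ⟨hr, Or.inr rfl⟩
      rcases hab with ⟨ha, hb⟩ | ⟨hb, ha⟩
      · exact ⟨Sum.inr v', by rw [ha]; exact hm1, by rw [hb]; exact hm2⟩
      · exact ⟨Sum.inr v', by rw [ha]; exact hm2, by rw [hb]; exact hm1⟩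
  · -- connected
    intro v'
    by_cases hr : v' ∈ Set.range h
    · obtain ⟨u, rfl⟩ := hr
      set A : Set T := {t | u ∈ D.bag t} with hAdef
      have hiso : TG.induce A ≃g TG'.induce (Sum.inl '' A : Set (T ⊕ V')) := by
        refine ⟨Equiv.Set.image Sum.inl A Sum.inl_injective, ?_⟩
        rintro ⟨a, ha⟩ ⟨b, hb⟩
        show TG'.Adj (Sum.inl a) (Sum.inl b) ↔ TG.Adj a b
        exact adj_ll a b
      have hS0 : (TG'.induce (Sum.inl '' A : Set (T ⊕ V'))).Connected :=
        hiso.connected_iff.mp (D.connected u)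
      refine conn_extend hS0 ?_ ?_
      · rintro n ⟨t, ht, rfl⟩
        exact (mem_bag_h u t).mpr ht
      · rintro (t | w) hn hn0
        · exfalso
          apply hn0
          exact ⟨t, (mem_bag_h u t).mp hn, rfl⟩
        · have hw : h u ∈ bag' (Sum.inr w) := hn
          rw [mem_bag_inr] at hw
          obtain ⟨hrw, hw | hw⟩ := hw
          · have hbw : base w = u := hinj hw.symm
            refine ⟨Sum.inl (att w), ?_, (adj_lr _ _).mpr rfl⟩
            refine ⟨att w, ?_, rfl⟩
            show u ∈ D.bag (τ (base w))
            rw [hbw]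
            exact hτ u
          · exact absurd ⟨u, hw⟩ hrw
    · -- v' not in range h : singleton
      have hset : {n | v' ∈ bag' n} = {Sum.inr v'} := by
        ext n
        simp only [Set.mem_setOf_eq, Set.mem_singleton_iff]
        constructor
        · intro hn
          match n with
          | Sum.inl t =>
            exfalso
            obtain ⟨w, _, hwe⟩ := (mem_bag_inl v' t).mp hn
            exact hr ⟨w, hwe⟩
          | Sum.inr w =>
            rw [mem_bag_inr] at hn
            obtain ⟨hrw, hn | hn⟩ := hn
            · exact absurd ⟨base w, hn.symm⟩ hr
            · rw [hn]
        · rintro rfl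
          exact (mem_bag_inr _ _).mpr ⟨hr, Or.inr rfl⟩
      rw [hset]
      exact conn_induce_singleton _ _
  · -- width
    rintro (t | w)
    · calc ((D.bag t).image h).card ≤ (D.bag t).card := Finset.card_image_le
        _ ≤ k + 1 := hw t
        _ ≤ max k 1 + 1 := by omega
    · show (if w ∈ Set.range h then (∅ : Finset V') else {h (base w), w}).card ≤ _
      split
      · simp
      · calc ({h (base w), w} : Finset V').card ≤ 2 := Finset.card_insert_le _ _ |>.trans (by simp)
          _ ≤ max k 1 + 1 := by omega

/-- Anchor variable of a clause. -/
def vOf (c : Clause) : ℕ := c.varsOf.sup id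

lemma vOf_ucl (H : QUBO) (i : ℕ) : vOf (ucl H i) = i := by
  simp [vOf, varsOf_ucl]

/-- The map from the vertices of the incidence graph of `H` to those of the
incidence graph of the constructed WCNF. -/
noncomputable def hmap (H : QUBO) : (ℕ ⊕ (ℕ ⊕ ℕ × ℕ)) → (ℕ ⊕ Clause) := fun a =>
  match a with
  | Sum.inl x => Sum.inl x
  | Sum.inr (Sum.inl i) => Sum.inr (dd (2 * i))
  | Sum.inr (Sum.inr p) =>
      if H.quad p.1 p.2 ≠ 0 then Sum.inr (bcl H p)
      else Sum.inr (dd (2 * Nat.pair p.1 p.2 + 1))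

lemma hmap_inj (H : QUBO) : Function.Injective (hmap H) := by
  have hcb : ∀ p : ℕ × ℕ, H.quad p.1 p.2 ≠ 0 → (bcl H p).card = 2 := fun p hp =>
    card_bcl H (Nat.ne_of_lt (H.quad_lt _ _ hp))
  rintro (x | (i | p)) (y | (j | q)) hab <;>
    simp only [hmap] at hab
  · rw [Sum.inl.injEq] at hab; rw [hab]
  · cases hab
  · split at hab <;> cases hab
  · cases hab
  · rw [Sum.inr.injEq] at hab
    have h2 := dd_inj hab
    have : i = j := by omega
    rw [this]
  · split at hab
    · rw [Sum.inr.injEq] at hab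
      have h2 := hcb q (by assumption)
      rw [← hab, card_dd] at h2
      omega
    · rw [Sum.inr.injEq] at hab
      have := dd_inj hab
      omega
  · split at hab <;> cases hab
  · split at hab
    · rw [Sum.inr.injEq] at hab
      have h2 := hcb p (by assumption)
      rw [hab, card_dd] at h2
      omega
    · rw [Sum.inr.injEq] at hab
      have := dd_inj hab
      omega
  · split at hab <;> split at hab
    · rw [Sum.inr.injEq] at hab
      rw [bcl_inj H (by assumption) (by assumption) hab]
    · rw [Sum.inr.injEq] at hab
      have h2 := hcb p (by assumption)
      rw [hab, card_dd] at h2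
      omega
    · rw [Sum.inr.injEq] at hab
      have h2 := hcb q (by assumption)
      rw [← hab, card_dd] at h2
      omega
    · rw [Sum.inr.injEq] at hab
      have := dd_inj hab
      have := Nat.pair_eq_pair.mp (by omega : Nat.pair p.1 p.2 = Nat.pair q.1 q.2)
      rw [Prod.ext this.1 this.2]

lemma ucl_not_range (H : QUBO) (i : ℕ) :
    (Sum.inr (ucl H i) : ℕ ⊕ Clause) ∉ Set.range (hmap H) := by
  rintro ⟨(x | (j | p)), hw⟩ <;> simp only [hmap] at hw
  · cases hw
  · rw [Sum.inr.injEq] at hw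
    have := card_dd (2 * j)
    rw [hw, card_ucl] at this
    omega
  · split at hw
    · rw [Sum.inr.injEq] at hw
      have h2 := card_bcl H (Nat.ne_of_lt (H.quad_lt p.1 p.2 (by assumption)))
      rw [hw, card_ucl] at h2
      omega
    · rw [Sum.inr.injEq] at hw
      have := card_dd (2 * Nat.pair p.1 p.2 + 1)
      rw [hw, card_ucl] at this
      omega

/-- Anchor map for pendant vertices. -/
def basemap : (ℕ ⊕ Clause) → (ℕ ⊕ (ℕ ⊕ ℕ × ℕ)) := fun v =>
  match v with
  | Sum.inl _ => Sum.inl 0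
  | Sum.inr c => Sum.inl (vOf c)

lemma hasTD_inc (H : QUBO) {k : ℕ} (hk : HasTD H.inc k) :
    HasTD (incOf (cls H)) (max k 1) := by
  apply transfer (hmap H) (hmap_inj H) basemap _ hk
  intro a b hadj
  rw [incOf, SimpleGraph.fromRel_adj] at hadj
  obtain ⟨hne, hr⟩ := hadj
  -- core claim for the oriented relation
  have core : ∀ (x : ℕ) (c : Clause), c ∈ cls H → x ∈ c.varsOf →
      (∃ u v, H.inc.Adj u v ∧ (Sum.inl x : ℕ ⊕ Clause) = hmap H u ∧
        (Sum.inr c : ℕ ⊕ Clause) = hmap H v) ∨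
      ((Sum.inr c : ℕ ⊕ Clause) ∉ Set.range (hmap H) ∧
        (Sum.inl x : ℕ ⊕ Clause) = hmap H (basemap (Sum.inr c))) := by
    intro x c hc hx
    rw [cls, Finset.mem_union] at hc
    rcases hc with hc | hc
    · obtain ⟨i, _, rfl⟩ := Finset.mem_image.mp hc
      rw [varsOf_ucl, Finset.mem_singleton] at hx
      subst hx
      refine Or.inr ⟨ucl_not_range H x, ?_⟩
      show (Sum.inl x : ℕ ⊕ Clause) = hmap H (Sum.inl (vOf (ucl H x)))
      rw [vOf_ucl]
      rfl
    · obtain ⟨p, hp, rfl⟩ := Finset.mem_image.mp hc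
      have hq := (mem_PP H).mp hp
      rw [varsOf_bcl, Finset.mem_insert, Finset.mem_singleton] at hx
      refine Or.inl ⟨Sum.inl x, Sum.inr (Sum.inr p), ?_, rfl, ?_⟩
      · rw [QUBO.inc, SimpleGraph.fromRel_adj]
        exact ⟨by simp, Or.inl (Or.inr ⟨x, p.1, p.2, rfl, by rw [Prod.mk.eta], hq, hx⟩)⟩
      · show _ = (if H.quad p.1 p.2 ≠ 0 then Sum.inr (bcl H p)
          else Sum.inr (dd (2 * Nat.pair p.1 p.2 + 1)))
        rw [if_pos hq]
  rcases hr with ⟨x, c, rfl, rfl, hc, hx⟩ | ⟨x, c, rfl, rfl, hc, hx⟩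
  · rcases core x c hc hx with ⟨u, v, huv, he1, he2⟩ | ⟨hnr, he⟩
    · exact Or.inl ⟨u, v, huv, he1, he2⟩
    · exact Or.inr ⟨Sum.inr c, hnr, Or.inl ⟨he, rfl⟩⟩
  · rcases core x c hc hx with ⟨u, v, huv, he1, he2⟩ | ⟨hnr, he⟩
    · exact Or.inl ⟨v, u, huv.symm, he2, he1⟩
    · exact Or.inr ⟨Sum.inr c, hnr, Or.inr ⟨he, rfl⟩⟩

lemma tw_le_hasTD {V : Type} {G : SimpleGraph V} {k : ℕ} (h : HasTD G k) :
    tw G ≤ (k : ℕ∞) :=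
  sInf_le ⟨k, rfl, h⟩

lemma tw_attained {V : Type} {G : SimpleGraph V} (h : tw G ≠ ⊤) :
    ∃ k : ℕ, (k : ℕ∞) = tw G ∧ HasTD G k := by
  classical
  have hne : {k : ℕ | HasTD G k}.Nonempty := by
    by_contra hemp
    apply h
    rw [tw]
    refine le_antisymm le_top (le_sInf ?_)
    rintro x ⟨k, rfl, hk⟩
    exact absurd ⟨k, hk⟩ hemp
  set n := sInf {k : ℕ | HasTD G k} with hn
  have hmem : HasTD G n := Nat.sInf_mem hne
  refine ⟨n, le_antisymm ?_ (sInf_le ⟨n, rfl, hmem⟩), hmem⟩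
  apply le_sInf
  rintro x ⟨k, rfl, hk⟩
  exact_mod_cast Nat.sInf_le hk

end Stmt9

/-- every QUBO `H` translates into a WCNF `φ` (whose variables include those
of `H`) and an integer `Δ` such that for every `{0,1}`-assignment `x`, the minimum cost
over finite-cost assignments of `φ` extending `x` equals `H(x) + Δ`; in particular the
restrictions of the minimum-cost assignments of `φ` are exactly the ground states of `H`.
Moreover `tw φ ≤ max(tw H, 2)`, `tw φ ≤ tw H + 1`, `itw φ ≤ max(itw H, 2)`, and
`itw φ ≤ itw H + 1`. -/
theorem stmt9 (H : QUBO) :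
    ∃ (φ : WCNF) (Δ : ℤ),
      H.vars ⊆ φ.vars ∧
      (∀ x : ℕ → Bool, ∃ m : ℕ,
        (m : ℤ) = H.eval x + Δ ∧
        (∃ β, (∀ i ∈ H.vars, β i = x i) ∧ φ.costA β = (m : ℕ∞)) ∧
        (∀ β, (∀ i ∈ H.vars, β i = x i) → (m : ℕ∞) ≤ φ.costA β)) ∧
      (∀ β, (∀ γ, φ.costA β ≤ φ.costA γ) → H.IsGround β) ∧
      (∀ x, H.IsGround x → ∃ β, (∀ i ∈ H.vars, β i = x i) ∧ ∀ γ, φ.costA β ≤ φ.costA γ) ∧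
      φ.tw ≤ max H.tw 2 ∧ φ.tw ≤ H.tw + 1 ∧
      φ.itw ≤ max H.itw 2 ∧ φ.itw ≤ H.itw + 1 := by
  classical
  refine ⟨Stmt9.Phi H, Stmt9.Dlt H, Stmt9.vars_sub H, ?_, ?_, ?_, ?_, ?_, ?_, ?_⟩
  · intro x
    refine ⟨Stmt9.Ncost H x, Stmt9.ncost_eq H x,
      ⟨x, fun _ _ => rfl, Stmt9.costA_eq H x⟩, ?_⟩
    intro β hβ
    rw [Stmt9.costA_eq]
    have h1 : (Stmt9.Ncost H β : ℤ) = (Stmt9.Ncost H x : ℤ) := by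
      rw [Stmt9.ncost_eq, Stmt9.ncost_eq, Stmt9.eval_congr H hβ]
    have h2 : Stmt9.Ncost H β = Stmt9.Ncost H x := by exact_mod_cast h1
    rw [h2]
  · intro β hβ y
    have h1 := hβ y
    rw [Stmt9.costA_eq, Stmt9.costA_eq] at h1
    have h2 : Stmt9.Ncost H β ≤ Stmt9.Ncost H y := by exact_mod_cast h1
    have h3 : (Stmt9.Ncost H β : ℤ) ≤ (Stmt9.Ncost H y : ℤ) := by exact_mod_cast h2
    rw [Stmt9.ncost_eq, Stmt9.ncost_eq] at h3
    linarith
  · intro x hx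
    refine ⟨x, fun _ _ => rfl, fun γ => ?_⟩
    rw [Stmt9.costA_eq, Stmt9.costA_eq]
    have h3 : (Stmt9.Ncost H x : ℤ) ≤ (Stmt9.Ncost H γ : ℤ) := by
      rw [Stmt9.ncost_eq, Stmt9.ncost_eq]
      have := hx γ
      linarith
    have h4 : Stmt9.Ncost H x ≤ Stmt9.Ncost H γ := by exact_mod_cast h3
    exact_mod_cast h4
  · show _root_.tw (primalOf (Stmt9.cls H)) ≤ max H.tw 2
    rw [Stmt9.primal_eq]
    exact le_max_left _ _
  · show _root_.tw (primalOf (Stmt9.cls H)) ≤ H.tw + 1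
    rw [Stmt9.primal_eq]
    exact le_self_add
  · show _root_.tw (incOf (Stmt9.cls H)) ≤ max H.itw 2
    by_cases hT : H.itw = ⊤
    · rw [hT, max_eq_left le_top]
      exact le_top
    · obtain ⟨k, hk, htd⟩ := Stmt9.tw_attained hT
      have h2 := Stmt9.tw_le_hasTD (Stmt9.hasTD_inc H htd)
      refine le_trans h2 ?_
      rw [show ((max k 1 : ℕ) : ℕ∞) = max (k : ℕ∞) 1 from by exact_mod_cast rfl]
      rw [show H.itw = (k : ℕ∞) from hk.symm]
      exact max_le_max le_rfl (by norm_num)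
  · show _root_.tw (incOf (Stmt9.cls H)) ≤ H.itw + 1
    by_cases hT : H.itw = ⊤
    · rw [hT, top_add]
      exact le_top
    · obtain ⟨k, hk, htd⟩ := Stmt9.tw_attained hT
      have h2 := Stmt9.tw_le_hasTD (Stmt9.hasTD_inc H htd)
      refine le_trans h2 ?_
      rw [show ((max k 1 : ℕ) : ℕ∞) = max (k : ℕ∞) 1 from by exact_mod_cast rfl]
      rw [show H.itw = (k : ℕ∞) from hk.symm]
      exact max_le le_self_add (by
        have : (1 : ℕ∞) ≤ (k : ℕ∞) + 1 := le_add_self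
        exact this)
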